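/- Let C''(c) be the (n+1)×(n+1) matrix with entries C''_{ij} = 1/(1 - xᵢyⱼ) for 1 ≤ i,j ≤ n, C''_{i,n+1} = 1/(1 - xᵢz), C''_{n+1,j} = 1/(1 - yⱼz), and C''_{n+1,n+1} = (1-c)/(1-z²). Then the coefficient of c¹ in det C''(c) equals -(1/(1-z²)) · ∏_{1≤i<j≤n}(xᵢ-xⱼ)(yᵢ-yⱼ) / ∏_{i,j=1}^n (1-xᵢyⱼ). -/

import Mathlib

open Finset Matrix

open Finset Matrix

lemma cauchy_det {K : Type*} [Field K] :
    ∀ (n : ℕ) (x y : Fin n → K), (∀ i j, 1 - x i * y j ≠ 0) →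
    Matrix.det (Matrix.of fun i j => 1 / (1 - x i * y j)) =
      (∏ i, ∏ j, if i < j then (x i - x j) * (y i - y j) else 1) /
        ∏ i, ∏ j, (1 - x i * y j) := by
  intro n
  induction n with
  | zero => intro x y _; simp [Matrix.det_fin_zero]
  | succ n ih =>
    intro x y hxy
    set B : Matrix (Fin (n+1)) (Fin (n+1)) K := Matrix.of fun i j =>
      if i = 0 then 1 / (1 - x 0 * y j)
      else 1 / (1 - x i * y j) - 1 / (1 - x 0 * y j) with hB
    have h1 : Matrix.det (Matrix.of fun i j : Fin (n+1) => 1 / (1 - x i * y j)) = B.det := by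
      apply Matrix.det_eq_of_forall_row_eq_smul_add_const
        (c := fun i : Fin (n+1) => if i = 0 then 0 else 1) 0 (by simp)
      intro i j
      by_cases h : i = 0 <;> simp [hB, h] <;> ring
    set D : Matrix (Fin (n+1)) (Fin (n+1)) K := Matrix.of fun i j =>
      if i = 0 then 1 else y j / (1 - x i * y j) with hD
    have h2 : B.det = (∏ i, (if i = 0 then 1 else x i - x 0)) *
        ((∏ j, 1 / (1 - x 0 * y j)) * D.det) := by
      have hBD : B = Matrix.of fun i j => (if i = 0 then 1 else x i - x 0) *
          (Matrix.of (fun i j => (1 / (1 - x 0 * y j)) * D i j) i j) := by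
        ext i j
        by_cases h : i = 0
        · simp [hB, hD, h]
        · have h0 := hxy 0 j; have hi := hxy i j
          simp only [hB, hD, Matrix.of_apply, if_neg h]
          field_simp
          have h0' : 1 - y j * x 0 ≠ 0 := by rwa [mul_comm] at h0
          field_simp
          ring
      rw [hBD, Matrix.det_mul_column, Matrix.det_mul_row]
    set E : Matrix (Fin (n+1)) (Fin (n+1)) K := Matrix.of fun i j =>
      if j = 0 then D i 0 else D i j - D i 0 with hE
    have h3 : D.det = E.det := by
      rw [← Matrix.det_transpose D, ← Matrix.det_transpose E]
      apply Matrix.det_eq_of_forall_row_eq_smul_add_const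
        (c := fun j : Fin (n+1) => if j = 0 then 0 else 1) 0 (by simp)
      intro j i
      by_cases h : j = 0 <;> simp [hE, Matrix.transpose_apply, h] <;> ring
    set F : Matrix (Fin (n+1)) (Fin (n+1)) K := Matrix.of fun i j =>
      if i = 0 then (if j = 0 then 1 else 0)
      else (if j = 0 then y 0 else 1 / (1 - x i * y j)) with hF
    have h4 : E.det = (∏ j, (if j = 0 then 1 else y j - y 0)) *
        ((∏ i, (if i = 0 then 1 else 1 / (1 - x i * y 0))) * F.det) := by
      have hEF : E = Matrix.of fun i j => (if j = 0 then 1 else y j - y 0) *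
          (Matrix.of (fun i j => (if i = 0 then 1 else 1 / (1 - x i * y 0)) * F i j) i j) := by
        ext i j
        by_cases hi : i = 0 <;> by_cases hj : j = 0
        · simp [hE, hD, hF, hi, hj]
        · simp [hE, hD, hF, hi, hj]
        · simp [hE, hD, hF, hi, hj, mul_comm, div_eq_mul_inv]
        · have h1' := hxy i j; have h2' := hxy i 0
          simp only [hE, hD, hF, Matrix.of_apply, if_neg hi, if_neg hj]
          field_simp
          have h3' : 1 - y j * x i ≠ 0 := by rwa [mul_comm] at h1'
          field_simp
          ring
      rw [hEF, Matrix.det_mul_row, Matrix.det_mul_column]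
    have h5 : F.det = Matrix.det (Matrix.of fun i j : Fin n => 1 / (1 - x i.succ * y j.succ)) := by
      rw [Matrix.det_succ_row_zero]
      rw [Fintype.sum_eq_single (0 : Fin (n+1)) (by
        intro j hj
        simp [hF, hj])]
      have hsub : F.submatrix Fin.succ ((0 : Fin (n+1)).succAbove) =
          Matrix.of fun i j : Fin n => 1 / (1 - x i.succ * y j.succ) := by
        ext i j
        simp [hF, Fin.succ_ne_zero]
      rw [hsub]
      simp [hF]
    have h6 := ih (fun i => x i.succ) (fun j => y j.succ) (fun i j => hxy i.succ j.succ)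
    rw [h1, h2, h3, h4, h5, h6]
    -- product bookkeeping
    have hR : (∏ i : Fin (n+1), (if i = 0 then 1 else x i - x 0)) =
        ∏ i : Fin n, (x i.succ - x 0) := by
      rw [Fin.prod_univ_succ]; simp [Fin.succ_ne_zero]
    have hW : (∏ j : Fin (n+1), (if j = 0 then 1 else y j - y 0)) =
        ∏ j : Fin n, (y j.succ - y 0) := by
      rw [Fin.prod_univ_succ]; simp [Fin.succ_ne_zero]
    have hT : (∏ i : Fin (n+1), (if i = 0 then 1 else 1 / (1 - x i * y 0))) =
        (∏ i : Fin n, (1 - x i.succ * y 0))⁻¹ := by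
      rw [Fin.prod_univ_succ]
      simp [Fin.succ_ne_zero, one_div, Finset.prod_inv_distrib]
    have hS : (∏ j : Fin (n+1), 1 / (1 - x 0 * y j)) =
        (∏ j : Fin (n+1), (1 - x 0 * y j))⁻¹ := by
      simp [one_div, Finset.prod_inv_distrib]
    have hP : (∏ i : Fin (n+1), ∏ j, if i < j then (x i - x j) * (y i - y j) else 1) =
        ((∏ i : Fin n, (x i.succ - x 0)) * ∏ j : Fin n, (y j.succ - y 0)) *
          ∏ i : Fin n, ∏ j : Fin n,
            (if i < j then (x i.succ - x j.succ) * (y i.succ - y j.succ) else 1) := by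
      rw [Fin.prod_univ_succ]
      congr 1
      · rw [Fin.prod_univ_succ]
        simp only [lt_irrefl, if_neg, Fin.succ_pos, if_pos, one_mul, ite_false, ite_true]
        rw [← Finset.prod_mul_distrib]
        exact Finset.prod_congr rfl fun j _ => by ring
      · exact Finset.prod_congr rfl fun i _ => by
          rw [Fin.prod_univ_succ]
          simp [Fin.succ_lt_succ_iff]
    have hQ : (∏ i : Fin (n+1), ∏ j : Fin (n+1), (1 - x i * y j)) =
        (∏ j : Fin (n+1), (1 - x 0 * y j)) *
          ((∏ i : Fin n, (1 - x i.succ * y 0)) *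
            ∏ i : Fin n, ∏ j : Fin n, (1 - x i.succ * y j.succ)) := by
      rw [Fin.prod_univ_succ]
      congr 1
      rw [← Finset.prod_mul_distrib]
      exact Finset.prod_congr rfl fun i _ => by rw [Fin.prod_univ_succ]
    rw [hR, hW, hT, hS, hP, hQ]
    have hqy : (∏ j : Fin (n+1), (1 - x 0 * y j)) ≠ 0 :=
      Finset.prod_ne_zero_iff.mpr fun j _ => hxy 0 j
    have hqz : (∏ i : Fin n, (1 - x i.succ * y 0)) ≠ 0 :=
      Finset.prod_ne_zero_iff.mpr fun i _ => hxy i.succ 0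
    have hQ' : (∏ i : Fin n, ∏ j : Fin n, (1 - x i.succ * y j.succ)) ≠ 0 :=
      Finset.prod_ne_zero_iff.mpr fun i _ =>
        Finset.prod_ne_zero_iff.mpr fun j _ => hxy i.succ j.succ
    field_simp

lemma pairProd_filter_eq {K : Type*} [CommMonoid K] {n : ℕ} (g : Fin n → Fin n → K) :
    (∏ p ∈ Finset.univ.filter (fun p : Fin n × Fin n => p.1 < p.2), g p.1 p.2) =
      ∏ i, ∏ j, if i < j then g i j else 1 := by
  rw [Finset.prod_filter, Fintype.prod_prod_type]



open Polynomial in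
/-- The bordered Cauchy matrix `C''(c)`, with `c` an indeterminate (`Polynomial.X`). -/
noncomputable def CppMat (n : ℕ) {K : Type*} [Field K] (x y : Fin n → K) (z : K) :
    Matrix (Fin (n+1)) (Fin (n+1)) (Polynomial K) :=
  Matrix.of fun i j =>
    if hi : (i : ℕ) < n then
      if hj : (j : ℕ) < n then C (1 / (1 - x ⟨i, hi⟩ * y ⟨j, hj⟩))
      else C (1 / (1 - x ⟨i, hi⟩ * z))
    else
      if hj : (j : ℕ) < n then C (1 / (1 - y ⟨j, hj⟩ * z))
      else C (1 / (1 - z^2)) * (1 - X)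

open Polynomial in
/-- the coefficient of `c¹` in `det C''(c)`. -/
theorem stmt3 (n : ℕ) {K : Type*} [Field K] (x y : Fin n → K) (z : K)
    (hxy : ∀ i j, 1 - x i * y j ≠ 0) (hxz : ∀ i, 1 - x i * z ≠ 0)
    (hyz : ∀ j, 1 - y j * z ≠ 0) (hz : 1 - z^2 ≠ 0) :
    (Matrix.det (CppMat n x y z)).coeff 1 =
      -(1 / (1 - z^2)) *
        ((∏ p ∈ Finset.univ.filter (fun p : Fin n × Fin n => p.1 < p.2),
            (x p.1 - x p.2) * (y p.1 - y p.2)) /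
          ∏ i, ∏ j, (1 - x i * y j)) := by
  classical
  set a : K := 1 / (1 - z^2) with ha
  set M : Matrix (Fin (n+1)) (Fin (n+1)) K := Matrix.of fun i j =>
    if hi : (i : ℕ) < n then
      if hj : (j : ℕ) < n then 1 / (1 - x ⟨i, hi⟩ * y ⟨j, hj⟩)
      else 1 / (1 - x ⟨i, hi⟩ * z)
    else
      if hj : (j : ℕ) < n then 1 / (1 - y ⟨j, hj⟩ * z)
      else a with hM
  set u : Fin (n+1) → Polynomial K := fun j => if j = Fin.last n then 1 else 0 with hu
  have hlast : ∀ i : Fin (n+1), ¬ (i : ℕ) < n → i = Fin.last n := by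
    intro i hi
    have h2 := i.isLt
    apply Fin.ext
    rw [Fin.val_last]
    omega
  have hmapdet : ∀ (N : Matrix (Fin n) (Fin n) K), (N.map (C : K → Polynomial K)).det = C N.det := by
    intro N
    exact ((C : K →+* Polynomial K).map_det N).symm
  have hmapdet' : ∀ (N : Matrix (Fin (n+1)) (Fin (n+1)) K),
      (N.map (C : K → Polynomial K)).det = C N.det := by
    intro N
    exact ((C : K →+* Polynomial K).map_det N).symm
  have hCpp : CppMat n x y z =
      (M.map C).updateRow (Fin.last n) ((M.map C) (Fin.last n) + (-(C a * X)) • u) := by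
    ext i j : 2
    by_cases hi : (i : ℕ) < n
    · have hne : i ≠ Fin.last n := by
        rintro rfl; simp [Fin.val_last] at hi
      rw [Matrix.updateRow_ne hne]
      simp [CppMat, hM, hi, apply_dite (C : K → Polynomial K)]
    · have heq : i = Fin.last n := hlast i hi
      subst heq
      rw [Matrix.updateRow_self]
      simp only [Pi.add_apply, Pi.smul_apply, smul_eq_mul]
      by_cases hj : (j : ℕ) < n
      · have hjne : j ≠ Fin.last n := by
          rintro rfl; simp [Fin.val_last] at hj
        simp [CppMat, hM, hu, hi, hj, hjne]
      · have heq : j = Fin.last n := hlast j hj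
        subst heq
        simp only [CppMat, hM, hu, Matrix.of_apply, Matrix.map_apply, dif_neg hi, if_pos rfl]
        congr 1
        rw [ha, one_div]
        ring
  have hdet : (CppMat n x y z).det =
      (M.map C).det + (-(C a * X)) * ((M.map C).updateRow (Fin.last n) u).det := by
    rw [hCpp, Matrix.det_updateRow_add, Matrix.updateRow_eq_self,
      Matrix.det_updateRow_smul]
  have hcoeff0 : ((M.map C).det).coeff 1 = 0 := by
    rw [hmapdet']
    simp [Polynomial.coeff_C]
  have hminor : ((M.map C).updateRow (Fin.last n) u).det =
      C (Matrix.det (Matrix.of fun i j : Fin n => 1 / (1 - x i * y j))) := by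
    rw [Matrix.det_succ_row _ (Fin.last n)]
    rw [Fintype.sum_eq_single (Fin.last n) (by
      intro j hj
      simp [hu, hj])]
    have hsub : ((M.map C).updateRow (Fin.last n) u).submatrix
        ((Fin.last n).succAbove) ((Fin.last n).succAbove) =
        (Matrix.of fun i j : Fin n => 1 / (1 - x i * y j)).map C := by
      ext i j
      have hne : (Fin.castSucc i) ≠ Fin.last n := (Fin.castSucc_lt_last i).ne
      simp only [Fin.succAbove_last, Matrix.submatrix_apply, Matrix.updateRow_ne hne,
        Matrix.map_apply, Matrix.of_apply, hM]
      have hi' : ((Fin.castSucc i : Fin (n+1)) : ℕ) < n := by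
        simpa using i.isLt
      have hj' : ((Fin.castSucc j : Fin (n+1)) : ℕ) < n := by
        simpa using j.isLt
      rw [dif_pos hi', dif_pos hj']
      congr 1 <;> exact Fin.eta _ _ ▸ rfl
    rw [hsub, Matrix.updateRow_self]
    simp only [hu, if_pos rfl]
    rw [hmapdet]
    have : ((-1 : Polynomial K)) ^ ((Fin.last n : ℕ) + (Fin.last n : ℕ)) = 1 :=
      Even.neg_one_pow ⟨(Fin.last n : ℕ), rfl⟩
    rw [this, one_mul, one_mul]
  rw [hdet, Polynomial.coeff_add, hcoeff0, hminor, zero_add]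
  have : -(C a * X) * C (Matrix.det (Matrix.of fun i j : Fin n => 1 / (1 - x i * y j))) =
      -(C (a * Matrix.det (Matrix.of fun i j : Fin n => 1 / (1 - x i * y j))) * X) := by
    rw [Polynomial.C_mul]; ring
  rw [this, Polynomial.coeff_neg, Polynomial.coeff_mul_X, Polynomial.coeff_C_zero]
  rw [cauchy_det n x y hxy, pairProd_filter_eq (fun i j => (x i - x j) * (y i - y j))]
  ring
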